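/- The cotangent lift of the midpoint discretization map, R_d^{T*}(q, p, q̇, ṗ) = (q − q̇/2, p − ṗ/2, q + q̇/2, p + ṗ/2), is a symplectomorphism from (T(T*ℝⁿ), d_T ω) to (T*ℝⁿ × T*ℝⁿ, Ω₁₂ = pr₂*ω − pr₁*ω). -/
import Mathlib


open scoped BigOperators

/-- Euclidean pairing on ℝⁿ. -/
def dotR (n : ℕ) (a b : Fin n → ℝ) : ℝ := ∑ i, a i * b i

/-- Tangent-lifted symplectic form `d_T ω` on `T(T*ℝⁿ) ≅ ℝ^{4n}`, coordinates
`((q,p),(q̇,ṗ))`: `d_Tω((a,b,c,d),(a',b',c',d')) = ⟨a,d'⟩ − ⟨a',d⟩ + ⟨c,b'⟩ − ⟨c',b⟩`. -/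
def dTomega (n : ℕ)
    (u w : ((Fin n → ℝ) × (Fin n → ℝ)) × ((Fin n → ℝ) × (Fin n → ℝ))) : ℝ :=
  dotR n u.1.1 w.2.2 - dotR n w.1.1 u.2.2 + dotR n u.2.1 w.1.2 - dotR n w.2.1 u.1.2

/-- `Ω₁₂ = pr₂*ω − pr₁*ω` on `T*ℝⁿ × T*ℝⁿ ≅ ℝ^{4n}`, coordinates `((q₀,p₀),(q₁,p₁))`. -/
def Omega12 (n : ℕ)
    (u w : ((Fin n → ℝ) × (Fin n → ℝ)) × ((Fin n → ℝ) × (Fin n → ℝ))) : ℝ :=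
  (dotR n u.2.1 w.2.2 - dotR n w.2.1 u.2.2) - (dotR n u.1.1 w.1.2 - dotR n w.1.1 u.1.2)


lemma dotR_add_left (n : ℕ) (a b c : Fin n → ℝ) :
    dotR n (a + b) c = dotR n a c + dotR n b c := by
  simp [dotR, add_mul, Finset.sum_add_distrib]

lemma dotR_sub_left (n : ℕ) (a b c : Fin n → ℝ) :
    dotR n (a - b) c = dotR n a c - dotR n b c := by
  simp [dotR, sub_mul, Finset.sum_sub_distrib]

lemma dotR_smul_left (n : ℕ) (s : ℝ) (a c : Fin n → ℝ) :
    dotR n (s • a) c = s * dotR n a c := by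
  simp [dotR, Finset.mul_sum, mul_assoc]

lemma dotR_add_right (n : ℕ) (a b c : Fin n → ℝ) :
    dotR n c (a + b) = dotR n c a + dotR n c b := by
  simp [dotR, mul_add, Finset.sum_add_distrib]

lemma dotR_sub_right (n : ℕ) (a b c : Fin n → ℝ) :
    dotR n c (a - b) = dotR n c a - dotR n c b := by
  simp [dotR, mul_sub, Finset.sum_sub_distrib]

lemma dotR_smul_right (n : ℕ) (s : ℝ) (a c : Fin n → ℝ) :
    dotR n c (s • a) = s * dotR n c a := by
  simp only [dotR, Finset.mul_sum, Pi.smul_apply, smul_eq_mul]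
  exact Finset.sum_congr rfl fun i _ => by ring

lemma dotR_comm (n : ℕ) (a b : Fin n → ℝ) : dotR n a b = dotR n b a := by
  simp [dotR, mul_comm]

/-- The cotangent lift of the midpoint discretization map,
`R_d^{T*}(q,p,q̇,ṗ) = (q − q̇/2, p − ṗ/2, q + q̇/2, p + ṗ/2)`, is a symplectomorphism
from `(T(T*ℝⁿ), d_Tω)` to `(T*ℝⁿ × T*ℝⁿ, Ω₁₂)`. -/
theorem midpoint_cotangent_lift_symplectomorphism (n : ℕ)
    (R : ((Fin n → ℝ) × (Fin n → ℝ)) × ((Fin n → ℝ) × (Fin n → ℝ)) →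
      ((Fin n → ℝ) × (Fin n → ℝ)) × ((Fin n → ℝ) × (Fin n → ℝ)))
    (hR : ∀ q p qd pd, R ((q, p), (qd, pd)) =
      ((q - (1 / 2 : ℝ) • qd, p - (1 / 2 : ℝ) • pd),
       (q + (1 / 2 : ℝ) • qd, p + (1 / 2 : ℝ) • pd))) :
    IsLinearMap ℝ R ∧ Function.Bijective R ∧
    ∀ u w, Omega12 n (R u) (R w) = dTomega n u w := by
  have hR' : ∀ u, R u =
      ((u.1.1 - (1 / 2 : ℝ) • u.2.1, u.1.2 - (1 / 2 : ℝ) • u.2.2),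
       (u.1.1 + (1 / 2 : ℝ) • u.2.1, u.1.2 + (1 / 2 : ℝ) • u.2.2)) := by
    rintro ⟨⟨q, p⟩, ⟨qd, pd⟩⟩
    exact hR q p qd pd
  refine ⟨⟨?_, ?_⟩, ?_, ?_⟩
  · intro u v
    simp only [hR', Prod.fst_add, Prod.snd_add, Prod.mk_add_mk, smul_add]
    refine Prod.ext (Prod.ext ?_ ?_) (Prod.ext ?_ ?_) <;> abel
  · intro s u
    simp only [hR', Prod.smul_fst, Prod.smul_snd, Prod.smul_mk, smul_sub, smul_add,
      smul_comm s]
  · constructor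
    · intro u v huv
      simp only [hR', Prod.mk.injEq] at huv
      obtain ⟨⟨h1, h2⟩, h3, h4⟩ := huv
      have e1 : u.1.1 = v.1.1 := by
        linear_combination (norm := module) ((1:ℝ)/2) • h1 + ((1:ℝ)/2) • h3
      have e2 : u.1.2 = v.1.2 := by
        linear_combination (norm := module) ((1:ℝ)/2) • h2 + ((1:ℝ)/2) • h4
      have e3 : u.2.1 = v.2.1 := by
        linear_combination (norm := module) h3 - h1
      have e4 : u.2.2 = v.2.2 := by
        linear_combination (norm := module) h4 - h2
      exact Prod.ext (Prod.ext e1 e2) (Prod.ext e3 e4)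
    · intro w
      refine ⟨(((1 / 2 : ℝ) • (w.1.1 + w.2.1), (1 / 2 : ℝ) • (w.1.2 + w.2.2)),
        (w.2.1 - w.1.1, w.2.2 - w.1.2)), ?_⟩
      rw [hR']
      refine Prod.ext (Prod.ext ?_ ?_) (Prod.ext ?_ ?_) <;> · simp [smul_add, smul_sub]; module
  · intro u w
    simp only [hR', Omega12, dTomega, dotR_add_left, dotR_sub_left, dotR_smul_left,
      dotR_add_right, dotR_sub_right, dotR_smul_right]
    rw [dotR_comm n u.2.1 w.1.2]
    ring
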